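/- Let E be a dense linear subspace of ω = 𝕂^ℕ (product topology, 𝕂 = ℝ or ℂ) of countably infinite dimension. Then there exist a Hamel basis (vₙ)_{n∈ℕ} of E and a bijection α : ℕ → ℕ such that for every n ∈ ℕ the α(n)-th coordinate of vₙ equals 1, and the α(k)-th coordinate of vₙ equals 0 whenever k < n. -/

import Mathlib

noncomputable section

open Set Submodule
noncomputable section


lemma dense_interp (𝕜 : Type*) [RCLike 𝕜]
    (E : Submodule 𝕜 (ℕ → 𝕜)) (hE : Dense (E : Set (ℕ → 𝕜)))
    (S : Finset ℕ) (y : ℕ → 𝕜) :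
    ∃ x ∈ E, ∀ i ∈ S, x i = y i := by
  classical
  let π : (ℕ → 𝕜) →ₗ[𝕜] (S → 𝕜) :=
    { toFun := fun x i => x i
      map_add' := by intros; rfl
      map_smul' := by intros; rfl }
  have hcont : Continuous π := by
    apply continuous_pi
    intro i
    exact continuous_apply (i : ℕ)
  have hsurj : Function.Surjective π := by
    intro s
    refine ⟨fun i => if h : i ∈ S then s ⟨i, h⟩ else 0, ?_⟩
    funext i
    simp [π]
  have hdense : Dense ((E.map π : Set (S → 𝕜))) := by
    intro z
    obtain ⟨x, hx⟩ := hsurj z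
    have : π x ∈ closure (π '' (E : Set (ℕ → 𝕜))) := by
      apply image_closure_subset_closure_image hcont
      exact ⟨x, by simpa [hE.closure_eq] using Set.mem_univ x, rfl⟩
    simpa [hx, Submodule.map_coe] using this
  have hfin : FiniteDimensional 𝕜 (E.map π) := FiniteDimensional.finiteDimensional_submodule _
  have hclosed : IsClosed ((E.map π : Set (S → 𝕜))) :=
    Submodule.closed_of_finiteDimensional _
  have : (E.map π : Set (S → 𝕜)) = Set.univ := by
    rw [← hclosed.closure_eq, hdense.closure_eq]
  have hy : (fun i : S => y i) ∈ E.map π := by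
    rw [← SetLike.mem_coe, this]; trivial
  obtain ⟨x, hx, hxy⟩ := hy
  refine ⟨x, hx, fun i hi => ?_⟩
  have := congrFun hxy ⟨i, hi⟩
  exact this



lemma exists_not_mem_span_fin {𝕜 M : Type*} [Field 𝕜] [AddCommGroup M] [Module 𝕜 M]
    (e : Module.Basis ℕ 𝕜 M) (V : ℕ → M) (n : ℕ) :
    ∃ m, e m ∉ Submodule.span 𝕜 (V '' Set.Iio n) := by
  by_contra h
  push_neg at h
  have htop : Submodule.span 𝕜 (V '' Set.Iio n) = ⊤ := by
    rw [eq_top_iff, ← e.span_eq, Submodule.span_le]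
    rintro x ⟨m, rfl⟩
    exact h m
  have hfin : Module.Finite 𝕜 M := by
    rw [Module.finite_def, ← htop]
    exact Submodule.fg_span ((Set.finite_Iio n).image V)
  exact (not_finite_iff_infinite.mpr inferInstance) (Module.Finite.finite_basis e)




def Spec14 {𝕜 : Type*} [RCLike 𝕜] (E : Submodule 𝕜 (ℕ → 𝕜)) (e : Module.Basis ℕ 𝕜 E)
    (prev : ℕ → E × ℕ) (n : ℕ) (p : E × ℕ) : Prop :=
  ((p.1 : ℕ → 𝕜) p.2 = 1) ∧
  (∀ k < n, (p.1 : ℕ → 𝕜) (prev k).2 = 0) ∧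
  (Even n → ∀ m : ℕ,
    (∀ m' < m, e m' ∈ span 𝕜 ((fun k => (prev k).1) '' Set.Iio n)) →
      e m ∈ span 𝕜 (insert p.1 ((fun k => (prev k).1) '' Set.Iio n))) ∧
  (¬ Even n → ∀ j : ℕ, (∀ j' < j, ∃ k < n, (prev k).2 = j') →
      (∃ k < n, (prev k).2 = j) ∨ p.2 = j)

lemma spec14_congr {𝕜 : Type*} [RCLike 𝕜] {E : Submodule 𝕜 (ℕ → 𝕜)} {e : Module.Basis ℕ 𝕜 E}
    {prev prev' : ℕ → E × ℕ} {n : ℕ} {p : E × ℕ}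
    (hagree : ∀ k < n, prev k = prev' k) (h : Spec14 E e prev n p) :
    Spec14 E e prev' n p := by
  have himg : (fun k => (prev k).1) '' Set.Iio n = (fun k => (prev' k).1) '' Set.Iio n :=
    Set.image_congr fun k hk => by rw [hagree k hk]
  obtain ⟨h1, h2, h3, h4⟩ := h
  refine ⟨h1, fun k hk => by rw [← hagree k hk]; exact h2 k hk, ?_, ?_⟩
  · intro hev m hm
    rw [← himg]
    exact h3 hev m (by rw [himg]; exact hm)
  · intro hodd j hj
    have := h4 hodd j (fun j' hj' => by
      obtain ⟨k, hk, hk2⟩ := hj j' hj'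
      exact ⟨k, hk, by rw [hagree k hk]; exact hk2⟩)
    rcases this with ⟨k, hk, hk2⟩ | h
    · exact Or.inl ⟨k, hk, by rw [← hagree k hk]; exact hk2⟩
    · exact Or.inr h

lemma exists_step {𝕜 : Type*} [RCLike 𝕜] (E : Submodule 𝕜 (ℕ → 𝕜))
    (hE : Dense (E : Set (ℕ → 𝕜))) (e : Module.Basis ℕ 𝕜 E)
    (prev : ℕ → E × ℕ) (n : ℕ)
    (hgood : ∀ k < n, Spec14 E e prev k (prev k)) :
    ∃ p, Spec14 E e prev n p := by
  classical
  set v : ℕ → E := fun k => (prev k).1 with hv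
  set a : ℕ → ℕ := fun k => (prev k).2 with ha
  have hv1 : ∀ k < n, (v k : ℕ → 𝕜) (a k) = 1 := fun k hk => (hgood k hk).1
  have hv0 : ∀ k < n, ∀ j < k, (v k : ℕ → 𝕜) (a j) = 0 :=
    fun k hk j hj => (hgood k hk).2.1 j hj
  by_cases hpar : Even n
  · -- even step: enlarge the span
    obtain h := exists_not_mem_span_fin e v n
    set m₀ := Nat.find h with hm₀
    have hm₀spec : e m₀ ∉ span 𝕜 (v '' Set.Iio n) := Nat.find_spec h
    -- triangular elimination
    set u : ℕ → E := fun k => Nat.rec (e m₀)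
      (fun k uk => uk - ((uk : ℕ → 𝕜) (a k)) • v k) k with hu
    have hustep : ∀ k, u (k + 1) = u k - ((u k : ℕ → 𝕜) (a k)) • v k := fun k => rfl
    have hu0 : ∀ k, k ≤ n → ∀ j < k, (u k : ℕ → 𝕜) (a j) = 0 := by
      intro k
      induction k with
      | zero => intro _ j hj; omega
      | succ i ih =>
        intro hk j hj
        have hkn : i < n := by omega
        rw [hustep i]
        push_cast [Submodule.coe_sub, Submodule.coe_smul]
        rcases Nat.lt_succ_iff_lt_or_eq.mp hj with hj' | rfl
        · simp [ih (by omega) j hj', hv0 i hkn j hj']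
        · simp [hv1 _ hkn]
    have humem : ∀ k, k ≤ n → u k - e m₀ ∈ span 𝕜 (v '' Set.Iio n) := by
      intro k
      induction k with
      | zero =>
        intro _
        have h0 : u 0 = e m₀ := rfl
        rw [h0, sub_self]; exact zero_mem _
      | succ i ih =>
        intro hk
        rw [hustep i, sub_right_comm]
        exact sub_mem (ih (by omega))
          (smul_mem _ _ (subset_span ⟨i, Set.mem_Iio.mpr (by omega), rfl⟩))
    have hune : u n ≠ 0 := by
      intro h0
      apply hm₀spec
      have := humem n le_rfl
      rw [h0, zero_sub] at this
      simpa using neg_mem this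
    have : (u n : ℕ → 𝕜) ≠ 0 := by
      simpa [Submodule.coe_eq_zero] using hune
    obtain ⟨j, hj⟩ := Function.ne_iff.mp this
    set c : 𝕜 := (u n : ℕ → 𝕜) j with hc
    have hc0 : c ≠ 0 := by simpa using hj
    refine ⟨(c⁻¹ • u n, j), ?_, ?_, ?_, ?_⟩
    · push_cast [Submodule.coe_smul]
      simp [← hc, inv_mul_cancel₀ hc0]
    · intro k hk
      push_cast [Submodule.coe_smul]
      simp [hu0 n le_rfl k hk]
      exact Or.inr (hu0 n le_rfl k hk)
    · intro _ m hm
      by_cases hmem : e m ∈ span 𝕜 (v '' Set.Iio n)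
      · exact span_mono (Set.subset_insert _ _) hmem
      · have hmm : m₀ = m := by
          have h1 : m₀ ≤ m := Nat.find_le hmem
          have h2 : ¬ m₀ < m := fun hlt => hm₀spec (hm m₀ hlt)
          omega
        have hu_in : u n ∈ span 𝕜 (insert ((c⁻¹ • u n : E)) (v '' Set.Iio n)) := by
          have h1 : (c⁻¹ • u n : E) ∈ span 𝕜 (insert ((c⁻¹ • u n : E)) (v '' Set.Iio n)) :=
            subset_span (Set.mem_insert _ _)
          have h2 := smul_mem (span 𝕜 (insert ((c⁻¹ • u n : E)) (v '' Set.Iio n))) c h1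
          rwa [smul_smul, mul_inv_cancel₀ hc0, one_smul] at h2
        rw [← hmm, ← sub_sub_cancel (u n) (e m₀)]
        exact sub_mem hu_in (span_mono (Set.subset_insert _ _) (humem n le_rfl))
    · intro hodd; exact absurd hpar hodd
  · -- odd step: hit a new coordinate, using density
    have hex : ∃ j : ℕ, ∀ k < n, a k ≠ j := by
      obtain ⟨j, hj⟩ := ((Finset.range n).image a).exists_notMem
      exact ⟨j, fun k hk hak => hj (Finset.mem_image.mpr ⟨k, Finset.mem_range.mpr hk, hak⟩)⟩
    set j₀ := Nat.find hex with hj₀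
    have hj₀spec : ∀ k < n, a k ≠ j₀ := Nat.find_spec hex
    obtain ⟨x, hxE, hxS⟩ := dense_interp 𝕜 E hE (insert j₀ ((Finset.range n).image a))
      (fun i => if i = j₀ then 1 else 0)
    refine ⟨(⟨x, hxE⟩, j₀), ?_, ?_, ?_, ?_⟩
    · simpa using hxS j₀ (Finset.mem_insert_self _ _)
    · intro k hk
      have := hxS (a k) (Finset.mem_insert_of_mem
        (Finset.mem_image.mpr ⟨k, Finset.mem_range.mpr hk, rfl⟩))
      simpa [hj₀spec k hk] using this
    · intro hev; exact absurd hev hpar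
    · intro _ j hj
      by_cases hmem : ∃ k < n, a k = j
      · exact Or.inl hmem
      · push_neg at hmem
        refine Or.inr ?_
        have h1 : j₀ ≤ j := Nat.find_le hmem
        have h2 : ¬ j₀ < j := by
          intro hlt
          obtain ⟨k, hk, hak⟩ := hj j₀ hlt
          exact hj₀spec k hk hak
        omega

lemma exists_step' {𝕜 : Type*} [RCLike 𝕜] (E : Submodule 𝕜 (ℕ → 𝕜))
    (hE : Dense (E : Set (ℕ → 𝕜))) (e : Module.Basis ℕ 𝕜 E)
    (prev : ℕ → E × ℕ) (n : ℕ) :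
    ∃ p, ((∀ k < n, Spec14 E e prev k (prev k)) → Spec14 E e prev n p) := by
  by_cases h : ∀ k < n, Spec14 E e prev k (prev k)
  · obtain ⟨p, hp⟩ := exists_step E hE e prev n h
    exact ⟨p, fun _ => hp⟩
  · exact ⟨(0, 0), fun hh => absurd hh h⟩

def seq14 {𝕜 : Type*} [RCLike 𝕜] (E : Submodule 𝕜 (ℕ → 𝕜))
    (hE : Dense (E : Set (ℕ → 𝕜))) (e : Module.Basis ℕ 𝕜 E) : ℕ → E × ℕ
  | n => Classical.choose (exists_step' E hE e
      (fun k => if h : k < n then seq14 E hE e k else (0, 0)) n)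
  decreasing_by all_goals exact h

lemma seq14_good {𝕜 : Type*} [RCLike 𝕜] (E : Submodule 𝕜 (ℕ → 𝕜))
    (hE : Dense (E : Set (ℕ → 𝕜))) (e : Module.Basis ℕ 𝕜 E) (n : ℕ) :
    Spec14 E e (seq14 E hE e) n (seq14 E hE e n) := by
  induction n using Nat.strong_induction_on with
  | _ n ih =>
    set prevn : ℕ → E × ℕ := fun k => if h : k < n then seq14 E hE e k else (0, 0) with hprevn
    have hd : seq14 E hE e n = Classical.choose (exists_step' E hE e prevn n) := by
      rw [seq14]
    have hgood : ∀ k < n, Spec14 E e prevn k (prevn k) := by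
      intro k hk
      have h1 : Spec14 E e prevn k (seq14 E hE e k) :=
        spec14_congr (fun j hj => by simp [hprevn, show j < n by omega]) (ih k hk)
      have h2 : prevn k = seq14 E hE e k := by simp [hprevn, hk]
      rw [h2]; exact h1
    have := Classical.choose_spec (exists_step' E hE e prevn n) hgood
    rw [← hd] at this
    exact spec14_congr (fun j hj => by simp [hprevn, hj]) this

/-- Lemma wow: every dense countably infinite-dimensional linear subspace
`E` of `ω = 𝕜^ℕ` has a Hamel basis `(vₙ)` and a bijection `α : ℕ → ℕ` such that
`δ_{α(n)}(vₙ) = 1` and `δ_{α(k)}(vₙ) = 0` for `k < n`. -/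
theorem dense_subspace_of_omega_triangular_basis
    (𝕜 : Type*) [RCLike 𝕜]
    (E : Submodule 𝕜 (ℕ → 𝕜)) (hE : Dense (E : Set (ℕ → 𝕜)))
    (hdim : Nonempty (Module.Basis ℕ 𝕜 E)) :
    ∃ (v : Module.Basis ℕ 𝕜 E) (α : ℕ → ℕ), Function.Bijective α ∧
      (∀ n : ℕ, ((v n : ℕ → 𝕜)) (α n) = 1) ∧
      (∀ n k : ℕ, k < n → ((v n : ℕ → 𝕜)) (α k) = 0) := by
  classical
  obtain ⟨e⟩ := hdim
  set V : ℕ → E := fun n => (seq14 E hE e n).1 with hV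
  set A : ℕ → ℕ := fun n => (seq14 E hE e n).2 with hA
  have hgood := seq14_good E hE e
  have h1 : ∀ n, (V n : ℕ → 𝕜) (A n) = 1 := fun n => (hgood n).1
  have h0 : ∀ n, ∀ k < n, (V n : ℕ → 𝕜) (A k) = 0 := fun n => (hgood n).2.1
  have hinj : Function.Injective A := by
    intro i j hij
    by_contra hne
    rcases lt_or_gt_of_ne hne with h | h
    · have := h0 j i h; rw [hij, h1 j] at this; exact one_ne_zero this
    · have := h0 i j h; rw [← hij, h1 i] at this; exact one_ne_zero this
  have hli : LinearIndependent 𝕜 V := by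
    rw [linearIndependent_iff']
    intro s g hsum i hi
    by_contra hgi
    have hex : ∃ i, i ∈ s ∧ g i ≠ 0 := ⟨i, hi, hgi⟩
    set i₀ := Nat.find hex with hi₀
    obtain ⟨hi₀s, hgi₀⟩ := Nat.find_spec hex
    have hc := congrArg (fun x : E => (x : ℕ → 𝕜) (A i₀)) hsum
    simp only [ZeroMemClass.coe_zero, Pi.zero_apply] at hc
    have hcoe : ((↑(∑ k ∈ s, g k • V k) : ℕ → 𝕜)) (A i₀)
        = ∑ k ∈ s, g k * (V k : ℕ → 𝕜) (A i₀) := by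
      rw [AddSubmonoidClass.coe_finset_sum]
      simp [Finset.sum_apply]
    rw [hcoe] at hc
    rw [Finset.sum_eq_single i₀] at hc
    · rw [h1 i₀, mul_one] at hc; exact hgi₀ hc
    · intro b hb hbne
      rcases lt_or_gt_of_ne hbne with hlt | hgt
      · have : ¬ (b ∈ s ∧ g b ≠ 0) := Nat.find_min hex hlt
        push_neg at this
        rw [this hb, zero_mul]
      · rw [h0 b i₀ hgt, mul_zero]
    · intro habs; exact absurd hi₀s habs
  have hspan1 : ∀ m, e m ∈ span 𝕜 (V '' Set.Iic (2 * m)) := by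
    intro m
    induction m using Nat.strong_induction_on with
    | _ m ih =>
      have heven : Even (2 * m) := even_two_mul m
      have hhyp : ∀ m' < m, e m' ∈ span 𝕜 (V '' Set.Iio (2 * m)) := by
        intro m' hm'
        refine span_mono (Set.image_mono ?_) (ih m' hm')
        intro x hx
        simp only [Set.mem_Iic] at hx
        simp only [Set.mem_Iio]
        omega
      have := (hgood (2 * m)).2.2.1 heven m hhyp
      have himg : insert (V (2 * m)) (V '' Set.Iio (2 * m)) = V '' Set.Iic (2 * m) := by
        rw [← Set.Iio_insert, Set.image_insert_eq]
      rwa [himg] at this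
  have hsp : ⊤ ≤ span 𝕜 (Set.range V) := by
    rw [← e.span_eq, span_le]
    rintro x ⟨m, rfl⟩
    exact span_mono (Set.image_subset_range _ _) (hspan1 m) 
  have hsurj : Function.Surjective A := by
    intro j
    have hbdd : ∀ j, ∃ k ≤ 2 * j + 1, A k = j := by
      intro j
      induction j using Nat.strong_induction_on with
      | _ j ih =>
        have hodd : ¬ Even (2 * j + 1) := by simp [parity_simps]
        have hhyp : ∀ j' < j, ∃ k < 2 * j + 1, A k = j' := by
          intro j' hj'
          obtain ⟨k, hk1, hk2⟩ := ih j' hj'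
          exact ⟨k, by omega, hk2⟩
        rcases (hgood (2 * j + 1)).2.2.2 hodd j hhyp with ⟨k, hk1, hk2⟩ | hk
        · exact ⟨k, by omega, hk2⟩
        · exact ⟨2 * j + 1, le_rfl, hk⟩
    obtain ⟨k, _, hk⟩ := hbdd j
    exact ⟨k, hk⟩
  refine ⟨Module.Basis.mk hli hsp, A, ⟨hinj, hsurj⟩, ?_, ?_⟩
  · intro n; rw [Module.Basis.mk_apply]; exact h1 n
  · intro n k hk; rw [Module.Basis.mk_apply]; exact h0 n k hk
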